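/- (Mass lumping error identity.) Let m : Fin N → Fin N → ℝ be symmetric (m i j = m j i) and define the lumped masses mL i := Σ_j m i j. Then for all p, q : Fin N → ℝ, Σ_i Σ_j m i j·p j·q i - Σ_i mL i·p i·q i = - Σ_{i < j} m i j·(p j - p i)·(q j - q i). -/

import Mathlib

open scoped BigOperators

/-- Mass lumping error identity: for a symmetric matrix `m` with lumped
masses `mL i = Σ_j m i j`,
`Σ_i Σ_j m i j·p j·q i - Σ_i mL i·p i·q i = -Σ_{i<j} m i j·(p j - p i)·(q j - q i)`. -/
theorem mass_lumping_error_identity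
    (N : ℕ) (hN : 1 ≤ N)
    (m : Fin N → Fin N → ℝ)
    (hm_symm : ∀ i j, m i j = m j i)
    (mL : Fin N → ℝ)
    (hmL : ∀ i, mL i = ∑ j, m i j)
    (p q : Fin N → ℝ) :
    (∑ i, ∑ j, m i j * p j * q i) - ∑ i, mL i * p i * q i
      = -∑ i, ∑ j ∈ Finset.univ.filter (fun j => i < j),
          m i j * (p j - p i) * (q j - q i) := by
  set F : Fin N → Fin N → ℝ := fun i j => m i j * (p j - p i) * (q j - q i) with hF
  have hFsymm : ∀ i j, F i j = F j i := by
    intro i j; simp only [hF]; rw [hm_symm i j]; ring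
  have hdiag : ∀ i, F i i = 0 := by intro i; simp [hF]
  have hsplit : ∑ i, ∑ j, F i j
      = (∑ i, ∑ j ∈ Finset.univ.filter (fun j => i < j), F i j)
        + ∑ i, ∑ j ∈ Finset.univ.filter (fun j => j < i), F i j := by
    rw [← Finset.sum_add_distrib]
    refine Finset.sum_congr rfl fun i _ => ?_
    rw [Finset.sum_filter, Finset.sum_filter, ← Finset.sum_add_distrib]
    refine Finset.sum_congr rfl fun j _ => ?_
    rcases lt_trichotomy i j with h | h | h
    · simp [h, not_lt_of_gt h]
    · simp [h, hdiag]
    · simp [h, not_lt_of_gt h]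
  have hswap : ∑ i, ∑ j ∈ Finset.univ.filter (fun j => j < i), F i j
      = ∑ i, ∑ j ∈ Finset.univ.filter (fun j => i < j), F i j := by
    simp_rw [Finset.sum_filter]
    rw [Finset.sum_comm]
    refine Finset.sum_congr rfl fun i _ => Finset.sum_congr rfl fun j _ => ?_
    by_cases h : i < j
    · simp [h, hFsymm i j]
    · simp [h]
  have hdouble : ∑ i, ∑ j, F i j
      = 2 * ∑ i, ∑ j ∈ Finset.univ.filter (fun j => i < j), F i j := by
    rw [hsplit, hswap]; ring
  have e1 : ∑ i, ∑ j, m i j * p j * q j = ∑ i, ∑ j, m i j * p i * q i := by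
    rw [Finset.sum_comm]
    exact Finset.sum_congr rfl fun j _ => Finset.sum_congr rfl fun i _ => by
      rw [hm_symm]
  have e2 : ∑ i, ∑ j, m i j * p i * q j = ∑ i, ∑ j, m i j * p j * q i := by
    rw [Finset.sum_comm]
    exact Finset.sum_congr rfl fun j _ => Finset.sum_congr rfl fun i _ => by
      rw [hm_symm]
  have hexp : ∑ i, ∑ j, F i j
      = 2 * ((∑ i, mL i * p i * q i) - ∑ i, ∑ j, m i j * p j * q i) := by
    have : ∑ i, ∑ j, F i j
        = (∑ i, ∑ j, m i j * p j * q j) - (∑ i, ∑ j, m i j * p j * q i)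
          - (∑ i, ∑ j, m i j * p i * q j) + ∑ i, ∑ j, m i j * p i * q i := by
      simp only [hF]
      rw [← Finset.sum_sub_distrib, ← Finset.sum_sub_distrib, ← Finset.sum_add_distrib]
      refine Finset.sum_congr rfl fun i _ => ?_
      rw [← Finset.sum_sub_distrib, ← Finset.sum_sub_distrib, ← Finset.sum_add_distrib]
      exact Finset.sum_congr rfl fun j _ => by ring
    rw [this, e1, e2]
    have hL : ∑ i, mL i * p i * q i = ∑ i, ∑ j, m i j * p i * q i := by
      refine Finset.sum_congr rfl fun i _ => ?_
      rw [hmL, Finset.sum_mul, Finset.sum_mul]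
    rw [hL]; ring
  have := hexp.symm.trans hdouble
  linarith
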